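/- arXiv:1908.04647 — 3 statements merged into one kernel-verified Lean document; each statement's English description precedes it below -/
import Mathlib

section
/- Let V and Q be nonzero finite-dimensional real inner product spaces. Let A : V × V → ℝ be a bilinear form satisfying A(v,v) ≥ α‖v‖² for all v ∈ V (with α > 0) and |A(u,v)| ≤ M_A‖u‖‖v‖ for all u,v ∈ V, and let B : V × Q → ℝ be a bilinear form with |B(v,q)| ≤ M_B‖v‖‖q‖ for all v ∈ V, q ∈ Q, which satisfies the inf-sup condition: for every q ∈ Q with q ≠ 0 one has sup over nonzero v ∈ V of B(v,q)/(‖v‖·‖q‖) ≥ β, for some β > 0. Then there exists a constant C > 0, depending only on α, M_A and M_B (and in particular independent of β and of δ), such that for every δ ∈ [0,1], the bilinear form a(u,p;v,q) := A(u,v) + B(v,p) − B(u,q) + δ⟨p,q⟩ satisfies the inf-sup bound: the infimum over nonzero (u,p) ∈ V × Q of the supremum over nonzero (v,q) ∈ V × Q of a(u,p;v,q)/(|||(u,p)||| · |||(v,q)|||) is at least C·max{β², δ}, where |||(v,q)|||² := ‖v‖² + (1+δ)‖q‖². -/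
open scoped RealInnerProductSpace

private lemma stmt_0_young (α M_A θ β a b : ℝ) (hα : 0 < α) (hMA : 0 < M_A)
    (hθ : 0 < θ) (hrel : 2 * θ * M_A ^ 2 = α * β) (ha : 0 ≤ a) (hb : 0 ≤ b) :
    θ * M_A * a * b ≤ α / 2 * a ^ 2 + θ * β / 4 * b ^ 2 := by
  have key : 2 * α * (θ * M_A * a * b) ≤ 2 * α * (α / 2 * a ^ 2 + θ * β / 4 * b ^ 2) := by
    have hexp : 2 * α * (α / 2 * a ^ 2 + θ * β / 4 * b ^ 2)
        = α ^ 2 * a ^ 2 + α * β * (θ / 2) * b ^ 2 := by ring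
    rw [hexp, ← hrel]
    nlinarith [sq_nonneg (α * a - θ * M_A * b)]
  exact le_of_mul_le_mul_left key (by positivity)

private lemma stmt_0_b1 (m α M_A θ β : ℝ) (hMA : 0 < M_A) (hβ : 0 ≤ β)
    (hrel : 2 * θ * M_A ^ 2 = α * β) (hmM : 8 * m * M_A ^ 2 ≤ α) :
    m * β ^ 2 ≤ θ * β / 4 := by
  nlinarith [mul_le_mul_of_nonneg_right hmM (mul_nonneg hβ hβ), mul_pos hMA hMA,
    sq_nonneg β]

private lemma stmt_0_normbound (Θ θ δ a b v2 : ℝ) (hθ0 : 0 ≤ θ) (hθΘ : θ ≤ Θ)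
    (hδ0 : 0 ≤ δ) (hδ1 : δ ≤ 1) (ha : 0 ≤ a) (hb : 0 ≤ b)
    (hv : v2 ≤ (a + θ * b) ^ 2) :
    v2 + (1 + δ) * b ^ 2 ≤ (2 + 2 * Θ ^ 2) * (a ^ 2 + (1 + δ) * b ^ 2) := by
  nlinarith [sq_nonneg (a - θ * b), mul_le_mul hθΘ hθΘ hθ0 (hθ0.trans hθΘ),
    sq_nonneg b, sq_nonneg a, mul_nonneg hδ0 (sq_nonneg b),
    mul_nonneg (mul_nonneg hδ0 (sub_nonneg.mpr hθΘ)) (sq_nonneg b),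
    mul_nonneg (sub_nonneg.mpr hθΘ) (mul_nonneg (hθ0.trans hθΘ) (sq_nonneg b)),
    mul_nonneg hδ0 (sq_nonneg a)]

set_option maxHeartbeats 1000000 in
/-- Abstract discrete inf-sup stability for the mixed form
`a(u,p;v,q) = A(u,v) + B(v,p) - B(u,q) + δ⟪p,q⟫` with the DG-type norm
`|||(v,q)|||² = ‖v‖² + (1+δ)‖q‖²`. -/
theorem stmt_0
    {V Q : Type*}
    [NormedAddCommGroup V] [InnerProductSpace ℝ V] [FiniteDimensional ℝ V] [Nontrivial V]
    [NormedAddCommGroup Q] [InnerProductSpace ℝ Q] [FiniteDimensional ℝ Q] [Nontrivial Q]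
    (A : V →ₗ[ℝ] V →ₗ[ℝ] ℝ) (B : V →ₗ[ℝ] Q →ₗ[ℝ] ℝ)
    (α M_A M_B : ℝ) (hα : 0 < α)
    (hAcoer : ∀ v : V, A v v ≥ α * ‖v‖ ^ 2)
    (hAbdd : ∀ u v : V, |A u v| ≤ M_A * ‖u‖ * ‖v‖)
    (hBbdd : ∀ (v : V) (q : Q), |B v q| ≤ M_B * ‖v‖ * ‖q‖) :
    ∃ C : ℝ, 0 < C ∧
      ∀ β : ℝ, 0 < β →
        (∀ q : Q, q ≠ 0 →
          (⨆ v : {v : V // v ≠ 0}, B v.1 q / (‖v.1‖ * ‖q‖)) ≥ β) →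
        ∀ δ : ℝ, δ ∈ Set.Icc (0 : ℝ) 1 →
          (⨅ up : {up : V × Q // up ≠ 0},
            ⨆ vq : {vq : V × Q // vq ≠ 0},
              (A up.1.1 vq.1.1 + B vq.1.1 up.1.2 - B up.1.1 vq.1.2
                  + δ * ⟪up.1.2, vq.1.2⟫) /
                (Real.sqrt (‖up.1.1‖ ^ 2 + (1 + δ) * ‖up.1.2‖ ^ 2) *
                  Real.sqrt (‖vq.1.1‖ ^ 2 + (1 + δ) * ‖vq.1.2‖ ^ 2)))
            ≥ C * max (β ^ 2) δ := by
  obtain ⟨v₀, hv₀⟩ := exists_ne (0 : V)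
  obtain ⟨q₀, hq₀⟩ := exists_ne (0 : Q)
  have hv₀n : 0 < ‖v₀‖ := norm_pos_iff.mpr hv₀
  have hq₀n : 0 < ‖q₀‖ := norm_pos_iff.mpr hq₀
  have hsq : ∀ a b : ℝ, 0 ≤ a → a ^ 2 ≤ b → a ≤ Real.sqrt b := by
    intro a b ha h
    rw [show a = Real.sqrt (a ^ 2) from (Real.sqrt_sq ha).symm]
    exact Real.sqrt_le_sqrt h
  have hMA : α ≤ M_A := by
    have h1 := hAcoer v₀
    have h2 := hAbdd v₀ v₀
    have h3 := le_abs_self (A v₀ v₀)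
    have h4 : α * ‖v₀‖ ^ 2 ≤ M_A * ‖v₀‖ ^ 2 := by linarith
    exact le_of_mul_le_mul_right h4 (by positivity)
  have hMApos : 0 < M_A := lt_of_lt_of_le hα hMA
  have hMB0 : 0 ≤ M_B := by
    have h1 := hBbdd v₀ q₀
    have h2 := abs_nonneg (B v₀ q₀)
    by_contra hMB
    push_neg at hMB
    have h3 : M_B * ‖v₀‖ * ‖q₀‖ < 0 := by
      calc M_B * ‖v₀‖ * ‖q₀‖ = M_B * (‖v₀‖ * ‖q₀‖) := by ring
        _ < 0 := mul_neg_of_neg_of_pos hMB (mul_pos hv₀n hq₀n)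
    linarith
  set t : ℝ := max M_B 1 with ht
  have ht1 : 1 ≤ t := le_max_right _ _
  have htpos : 0 < t := lt_of_lt_of_le one_pos ht1
  set Θ : ℝ := α * t / (2 * M_A ^ 2) with hΘ
  have hΘpos : 0 < Θ := by positivity
  set K : ℝ := Real.sqrt (2 + 2 * Θ ^ 2) with hK
  have hK2 : K ^ 2 = 2 + 2 * Θ ^ 2 := Real.sq_sqrt (by positivity)
  have hKpos : 0 < K := Real.sqrt_pos.mpr (by positivity)
  have hK1 : 1 ≤ K := hsq 1 _ zero_le_one (by linarith [sq_nonneg Θ])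
  set m : ℝ := min (α / (2 * t ^ 2)) (min (α / (8 * M_A ^ 2)) 1) with hm
  have hmpos : 0 < m :=
    lt_min (by positivity) (lt_min (by positivity) one_pos)
  have hm1 : m ≤ 1 := le_trans (min_le_right _ _) (min_le_right _ _)
  have hmt : 2 * m * t ^ 2 ≤ α := by
    have h' : m ≤ α / (2 * t ^ 2) := min_le_left _ _
    rw [le_div_iff₀ (by positivity)] at h'
    linarith
  have hmM : 8 * m * M_A ^ 2 ≤ α := by
    have h' : m ≤ α / (8 * M_A ^ 2) := le_trans (min_le_right _ _) (min_le_left _ _)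
    rw [le_div_iff₀ (by positivity)] at h'
    linarith
  refine ⟨m / (2 * K), by positivity, ?_⟩
  intro β hβ hinfsup δ hδ
  obtain ⟨hδ0, hδ1⟩ := hδ
  have hVne : Nonempty {v : V // v ≠ 0} := ⟨⟨v₀, hv₀⟩⟩
  have hsuple : ∀ q : Q, q ≠ 0 →
      (⨆ v : {v : V // v ≠ 0}, B v.1 q / (‖v.1‖ * ‖q‖)) ≤ M_B := by
    intro q hq
    apply ciSup_le
    intro v
    have hv : 0 < ‖v.1‖ := norm_pos_iff.mpr v.2
    have hq' : 0 < ‖q‖ := norm_pos_iff.mpr hq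
    rw [div_le_iff₀ (by positivity)]
    calc B v.1 q ≤ |B v.1 q| := le_abs_self _
      _ ≤ M_B * ‖v.1‖ * ‖q‖ := hBbdd _ _
      _ = M_B * (‖v.1‖ * ‖q‖) := by ring
  have hβM : β ≤ M_B := le_trans (hinfsup q₀ hq₀) (hsuple q₀ hq₀)
  have hβt : β ≤ t := le_trans hβM (le_max_left _ _)
  have hmaxle : max (β ^ 2) δ ≤ t ^ 2 := by
    apply max_le
    · have h1 := mul_le_mul hβt hβt hβ.le htpos.le
      have h2 : β ^ 2 = β * β := sq β
      have h3 : t ^ 2 = t * t := sq t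
      linarith
    · have h1 := mul_le_mul_of_nonneg_right ht1 htpos.le
      have h3 : t ^ 2 = t * t := sq t
      linarith
  have hmax0 : 0 ≤ max (β ^ 2) δ := le_max_of_le_right hδ0
  rw [ge_iff_le]
  have hUPne : Nonempty {up : V × Q // up ≠ 0} :=
    ⟨⟨(v₀, 0), by simp [Prod.ext_iff, hv₀]⟩⟩
  apply le_ciInf
  rintro ⟨⟨u, p⟩, hup⟩
  simp only
  have hup' : ¬(u = 0 ∧ p = 0) := fun ⟨h1, h2⟩ => hup (by simp [Prod.ext_iff, h1, h2])
  have hnup2 : 0 < ‖u‖ ^ 2 + (1 + δ) * ‖p‖ ^ 2 := by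
    rcases eq_or_ne u 0 with hu | hu
    · have hp : p ≠ 0 := fun hp => hup' ⟨hu, hp⟩
      have h1 : 0 < (1 + δ) * ‖p‖ ^ 2 := by
        have : 0 < ‖p‖ := norm_pos_iff.mpr hp
        positivity
      linarith [sq_nonneg ‖u‖]
    · have h1 : 0 < ‖u‖ ^ 2 := by
        have : 0 < ‖u‖ := norm_pos_iff.mpr hu
        positivity
      have h2 : 0 ≤ (1 + δ) * ‖p‖ ^ 2 := by positivity
      linarith
  set nup : ℝ := Real.sqrt (‖u‖ ^ 2 + (1 + δ) * ‖p‖ ^ 2) with hnupdef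
  have hnup : 0 < nup := Real.sqrt_pos.mpr hnup2
  have hnupsq : nup ^ 2 = ‖u‖ ^ 2 + (1 + δ) * ‖p‖ ^ 2 := Real.sq_sqrt hnup2.le
  have hun : ‖u‖ ≤ nup := hsq _ _ (norm_nonneg _)
    (by linarith [show (0:ℝ) ≤ (1 + δ) * ‖p‖ ^ 2 by positivity])
  have hpn : ‖p‖ ≤ nup := hsq _ _ (norm_nonneg _)
    (by linarith [sq_nonneg ‖u‖, show (0:ℝ) ≤ δ * ‖p‖ ^ 2 by positivity])
  -- boundedness of the sup family
  have hfbound : ∀ vq : {vq : V × Q // vq ≠ 0},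
      (A u vq.1.1 + B vq.1.1 p - B u vq.1.2 + δ * ⟪p, vq.1.2⟫) /
        (nup * Real.sqrt (‖vq.1.1‖ ^ 2 + (1 + δ) * ‖vq.1.2‖ ^ 2))
        ≤ M_A + 2 * M_B + 1 := by
    rintro ⟨⟨v, q⟩, hvq⟩
    simp only
    have hvq' : ¬(v = 0 ∧ q = 0) := fun ⟨h1, h2⟩ => hvq (by simp [Prod.ext_iff, h1, h2])
    have hnvq2 : 0 < ‖v‖ ^ 2 + (1 + δ) * ‖q‖ ^ 2 := by
      rcases eq_or_ne v 0 with hv | hv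
      · have hq : q ≠ 0 := fun hq => hvq' ⟨hv, hq⟩
        have h1 : 0 < (1 + δ) * ‖q‖ ^ 2 := by
          have : 0 < ‖q‖ := norm_pos_iff.mpr hq
          positivity
        linarith [sq_nonneg ‖v‖]
      · have h1 : 0 < ‖v‖ ^ 2 := by
          have : 0 < ‖v‖ := norm_pos_iff.mpr hv
          positivity
        have h2 : 0 ≤ (1 + δ) * ‖q‖ ^ 2 := by positivity
        linarith
    set nvq : ℝ := Real.sqrt (‖v‖ ^ 2 + (1 + δ) * ‖q‖ ^ 2) with hnvqdef
    have hnvq : 0 < nvq := Real.sqrt_pos.mpr hnvq2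
    have hvn : ‖v‖ ≤ nvq := hsq _ _ (norm_nonneg _)
      (by linarith [show (0:ℝ) ≤ (1 + δ) * ‖q‖ ^ 2 by positivity])
    have hqn : ‖q‖ ≤ nvq := hsq _ _ (norm_nonneg _)
      (by linarith [sq_nonneg ‖v‖, show (0:ℝ) ≤ δ * ‖q‖ ^ 2 by positivity])
    rw [div_le_iff₀ (by positivity)]
    have e1 : ‖u‖ * ‖v‖ ≤ nup * nvq :=
      mul_le_mul hun hvn (norm_nonneg _) hnup.le
    have e2 : ‖v‖ * ‖p‖ ≤ nvq * nup :=
      mul_le_mul hvn hpn (norm_nonneg _) hnvq.le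
    have e3 : ‖u‖ * ‖q‖ ≤ nup * nvq :=
      mul_le_mul hun hqn (norm_nonneg _) hnup.le
    have e4 : ‖p‖ * ‖q‖ ≤ nup * nvq :=
      mul_le_mul hpn hqn (norm_nonneg _) hnup.le
    have f1 : A u v ≤ M_A * (nup * nvq) := by
      calc A u v ≤ M_A * ‖u‖ * ‖v‖ := le_trans (le_abs_self _) (hAbdd _ _)
        _ = M_A * (‖u‖ * ‖v‖) := by ring
        _ ≤ M_A * (nup * nvq) := mul_le_mul_of_nonneg_left e1 hMApos.le
    have f2 : B v p ≤ M_B * (nup * nvq) := by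
      calc B v p ≤ M_B * ‖v‖ * ‖p‖ := le_trans (le_abs_self _) (hBbdd _ _)
        _ = M_B * (‖v‖ * ‖p‖) := by ring
        _ ≤ M_B * (nvq * nup) := mul_le_mul_of_nonneg_left e2 hMB0
        _ = M_B * (nup * nvq) := by ring
    have f3 : -(B u q) ≤ M_B * (nup * nvq) := by
      calc -(B u q) ≤ |B u q| := neg_le_abs _
        _ ≤ M_B * ‖u‖ * ‖q‖ := hBbdd _ _
        _ = M_B * (‖u‖ * ‖q‖) := by ring
        _ ≤ M_B * (nup * nvq) := mul_le_mul_of_nonneg_left e3 hMB0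
    have f4 : δ * ⟪p, q⟫ ≤ nup * nvq := by
      calc δ * ⟪p, q⟫ ≤ δ * (‖p‖ * ‖q‖) :=
            mul_le_mul_of_nonneg_left (real_inner_le_norm _ _) hδ0
        _ ≤ 1 * (nup * nvq) := mul_le_mul hδ1 e4 (by positivity) one_pos.le
        _ = nup * nvq := one_mul _
    linarith [f1, f2, f3, f4]
  have hbdd : BddAbove (Set.range fun vq : {vq : V × Q // vq ≠ 0} =>
      (A u vq.1.1 + B vq.1.1 p - B u vq.1.2 + δ * ⟪p, vq.1.2⟫) /
        (nup * Real.sqrt (‖vq.1.1‖ ^ 2 + (1 + δ) * ‖vq.1.2‖ ^ 2))) :=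
    ⟨M_A + 2 * M_B + 1, by rintro x ⟨vq, rfl⟩; exact hfbound vq⟩
  have hCsmall : m / (2 * K) * max (β ^ 2) δ ≤ α := by
    have h1 : m / (2 * K) ≤ m := by
      rw [div_le_iff₀ (by positivity)]
      have := mul_le_mul_of_nonneg_left hK1 hmpos.le
      linarith
    have h2 : m / (2 * K) * max (β ^ 2) δ ≤ m * t ^ 2 :=
      mul_le_mul h1 hmaxle hmax0 hmpos.le
    linarith
  rcases eq_or_ne p 0 with hp | hp
  · -- p = 0 : use test function (u, 0)
    subst hp
    have hu : u ≠ 0 := fun hu => hup' ⟨hu, rfl⟩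
    have hun' : 0 < ‖u‖ := norm_pos_iff.mpr hu
    refine le_ciSup_of_le hbdd ⟨(u, 0), by simp [Prod.ext_iff, hu]⟩ ?_
    have e0 : ‖u‖ ^ 2 + (1 + δ) * ‖(0 : Q)‖ ^ 2 = ‖u‖ ^ 2 := by simp
    have hnup' : nup = ‖u‖ := by
      rw [hnupdef]
      simp [Real.sqrt_sq (norm_nonneg u)]
    simp only [map_zero, inner_zero_left, mul_zero, add_zero, sub_zero, e0,
      Real.sqrt_sq (norm_nonneg u), hnup']
    rw [le_div_iff₀ (by positivity)]
    have hco := hAcoer u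
    calc m / (2 * K) * max (β ^ 2) δ * (‖u‖ * ‖u‖) ≤ α * (‖u‖ * ‖u‖) :=
          mul_le_mul_of_nonneg_right hCsmall (by positivity)
      _ = α * ‖u‖ ^ 2 := by ring
      _ ≤ A u u := hco
  · -- p ≠ 0 : use test function (u + θ • w', p)
    have hpn' : 0 < ‖p‖ := norm_pos_iff.mpr hp
    obtain ⟨w₁, hw₁⟩ := exists_lt_of_lt_ciSup
      (lt_of_lt_of_le (by linarith : β / 2 < β) (hinfsup p hp))
    set w : V := w₁.1 with hwdef
    have hw : w ≠ 0 := w₁.2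
    have hwn : 0 < ‖w‖ := norm_pos_iff.mpr hw
    have hBw : β / 2 * (‖w‖ * ‖p‖) ≤ B w p := by
      have h := hw₁.le
      rw [le_div_iff₀ (by positivity)] at h
      linarith
    set w' : V := (‖p‖ / ‖w‖) • w with hw'def
    have hw'n : ‖w'‖ = ‖p‖ := by
      rw [hw'def, norm_smul, Real.norm_of_nonneg (by positivity)]
      field_simp
    have hBw' : β / 2 * ‖p‖ ^ 2 ≤ B w' p := by
      have hBs : B w' p = (‖p‖ / ‖w‖) * B w p := by
        rw [hw'def, map_smul]; rfl
      rw [hBs]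
      have h := mul_le_mul_of_nonneg_left hBw (by positivity : (0:ℝ) ≤ ‖p‖ / ‖w‖)
      calc β / 2 * ‖p‖ ^ 2 = ‖p‖ / ‖w‖ * (β / 2 * (‖w‖ * ‖p‖)) := by
            field_simp
        _ ≤ ‖p‖ / ‖w‖ * B w p := h
    set θ : ℝ := α * β / (2 * M_A ^ 2) with hθdef
    have hθpos : 0 < θ := by positivity
    have hθrel : 2 * θ * M_A ^ 2 = α * β := by
      rw [hθdef]; field_simp
    have hθΘ : θ ≤ Θ := by
      rw [hθdef, hΘ]
      gcongr
    set v : V := u + θ • w' with hvdef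
    refine le_ciSup_of_le hbdd ⟨(v, p), fun h => hp ((Prod.ext_iff.mp h).2)⟩ ?_
    simp only
    have hAv : A u v = A u u + θ * A u w' := by
      rw [hvdef, map_add, map_smul]; rfl
    have hBv : B v p = B u p + θ * B w' p := by
      rw [hvdef, map_add, map_smul]; rfl
    have hip : ⟪p, p⟫ = ‖p‖ ^ 2 := real_inner_self_eq_norm_sq p
    have hnum : A u v + B v p - B u p + δ * ⟪p, p⟫
        = A u u + θ * A u w' + θ * B w' p + δ * ‖p‖ ^ 2 := by
      rw [hAv, hBv, hip]; ring
    have hAuw : -(M_A * ‖u‖ * ‖p‖) ≤ A u w' := by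
      have h := hAbdd u w'
      rw [hw'n] at h
      linarith [neg_abs_le (A u w')]
    have hAuu := hAcoer u
    have hYoung : θ * M_A * ‖u‖ * ‖p‖ ≤ α / 2 * ‖u‖ ^ 2 + θ * β / 4 * ‖p‖ ^ 2 :=
      stmt_0_young α M_A θ β ‖u‖ ‖p‖ hα hMApos hθpos hθrel (norm_nonneg _) (norm_nonneg _)
    have hN : m / 2 * max (β ^ 2) δ * (‖u‖ ^ 2 + (1 + δ) * ‖p‖ ^ 2)
        ≤ A u v + B v p - B u p + δ * ⟪p, p⟫ := by
      rw [hnum]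
      have hc1 : m * max (β ^ 2) δ ≤ α / 2 := by
        have := mul_le_mul_of_nonneg_left hmaxle hmpos.le
        linarith
      have hc2 : m * max (β ^ 2) δ ≤ θ * β / 4 + δ := by
        have hb1 : m * β ^ 2 ≤ θ * β / 4 :=
          stmt_0_b1 m α M_A θ β hMApos hβ.le hθrel hmM
        have hb2 : m * δ ≤ δ := by
          have := mul_le_mul_of_nonneg_right hm1 hδ0
          linarith
        have hms : max (β ^ 2) δ ≤ β ^ 2 + δ :=
          max_le (by linarith) (by linarith [sq_nonneg β])
        have hms' := mul_le_mul_of_nonneg_left hms hmpos.le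
        linarith
      have hlow : α / 2 * ‖u‖ ^ 2 + (θ * β / 4 + δ) * ‖p‖ ^ 2
          ≤ A u u + θ * A u w' + θ * B w' p + δ * ‖p‖ ^ 2 := by
        have h1 : -(θ * (M_A * ‖u‖ * ‖p‖)) ≤ θ * A u w' := by
          have := mul_le_mul_of_nonneg_left hAuw hθpos.le
          linarith
        have h2 : θ * (β / 2 * ‖p‖ ^ 2) ≤ θ * B w' p :=
          mul_le_mul_of_nonneg_left hBw' hθpos.le
        have h3 : θ * M_A * ‖u‖ * ‖p‖ ≤ α / 2 * ‖u‖ ^ 2 + θ * β / 4 * ‖p‖ ^ 2 := hYoung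
        linarith
      have hmid : m * max (β ^ 2) δ * (‖u‖ ^ 2 + ‖p‖ ^ 2)
          ≤ α / 2 * ‖u‖ ^ 2 + (θ * β / 4 + δ) * ‖p‖ ^ 2 := by
        have g1 := mul_le_mul_of_nonneg_right hc1 (sq_nonneg ‖u‖)
        have g2 := mul_le_mul_of_nonneg_right hc2 (sq_nonneg ‖p‖)
        linarith
      have hfin : m / 2 * max (β ^ 2) δ * (‖u‖ ^ 2 + (1 + δ) * ‖p‖ ^ 2)
          ≤ m * max (β ^ 2) δ * (‖u‖ ^ 2 + ‖p‖ ^ 2) := by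
        have g1 : 0 ≤ m * max (β ^ 2) δ * ‖u‖ ^ 2 :=
          mul_nonneg (mul_nonneg hmpos.le hmax0) (sq_nonneg _)
        have g2 : 0 ≤ m * max (β ^ 2) δ * ((1 - δ) * ‖p‖ ^ 2) :=
          mul_nonneg (mul_nonneg hmpos.le hmax0)
            (mul_nonneg (by linarith) (sq_nonneg _))
        linarith
      linarith
    have hvnorm : ‖v‖ ≤ ‖u‖ + θ * ‖p‖ := by
      calc ‖v‖ ≤ ‖u‖ + ‖θ • w'‖ := norm_add_le _ _
        _ = ‖u‖ + θ * ‖p‖ := by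
            rw [norm_smul, Real.norm_of_nonneg hθpos.le, hw'n]
    have hnvq2 : ‖v‖ ^ 2 + (1 + δ) * ‖p‖ ^ 2 ≤ K ^ 2 * nup ^ 2 := by
      rw [hK2, hnupsq]
      exact stmt_0_normbound Θ θ δ ‖u‖ ‖p‖ (‖v‖ ^ 2) hθpos.le hθΘ hδ0 hδ1
        (norm_nonneg _) (norm_nonneg _)
        (pow_le_pow_left₀ (norm_nonneg v) hvnorm 2)
    have hnvqpos : 0 < ‖v‖ ^ 2 + (1 + δ) * ‖p‖ ^ 2 := by
      have h1 : 0 < (1 + δ) * ‖p‖ ^ 2 := by positivity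
      linarith [sq_nonneg ‖v‖]
    have hnvqle : Real.sqrt (‖v‖ ^ 2 + (1 + δ) * ‖p‖ ^ 2) ≤ K * nup := by
      have h := Real.sqrt_le_sqrt hnvq2
      rwa [show K ^ 2 * nup ^ 2 = (K * nup) ^ 2 by ring,
        Real.sqrt_sq (by positivity)] at h
    have hnvqpos' : 0 < Real.sqrt (‖v‖ ^ 2 + (1 + δ) * ‖p‖ ^ 2) :=
      Real.sqrt_pos.mpr hnvqpos
    rw [le_div_iff₀ (by positivity)]
    calc m / (2 * K) * max (β ^ 2) δ * (nup * Real.sqrt (‖v‖ ^ 2 + (1 + δ) * ‖p‖ ^ 2))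
        ≤ m / (2 * K) * max (β ^ 2) δ * (nup * (K * nup)) := by
          apply mul_le_mul_of_nonneg_left
            (mul_le_mul_of_nonneg_left hnvqle hnup.le) (by positivity)
      _ = m / 2 * max (β ^ 2) δ * nup ^ 2 := by
          field_simp
      _ ≤ A u v + B v p - B u p + δ * ⟪p, p⟫ := by
          rw [hnupsq]; exact hN
end

section
/- Let n ≥ 1, let A be a real n × n matrix whose kernel {x ∈ ℝⁿ : Ax = 0} is one-dimensional, and let D ∈ ℝ^{n×n} be symmetric positive definite. Define Ã := D^{-1/2} A D^{-1/2}. Then the inf-sup constant γ_a, defined as the infimum over all nonzero x ∈ ℝⁿ satisfying xᵀD k = 0 for every k in the kernel of A, of the supremum over all nonzero y ∈ ℝⁿ of (yᵀ A x)/((yᵀ D y)^{1/2} (xᵀ D x)^{1/2}), equals the smallest positive singular value of Ã, i.e. the square root of the smallest nonzero eigenvalue of the symmetric positive-semidefinite matrix ÃᵀÃ. -/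
open scoped Matrix

/-- For a symmetric positive-definite real matrix `D`, `invSqrtPD D hD` is `D^{-1/2}`,
the inverse of the unique symmetric positive-definite square root of `D`. -/
noncomputable def invSqrtPD {n : ℕ} (D : Matrix (Fin n) (Fin n) ℝ) (hD : D.PosDef) :
    Matrix (Fin n) (Fin n) ℝ :=
  (hD.posSemidef.1.eigenvectorUnitary.1 *
    Matrix.diagonal (Real.sqrt ∘ hD.posSemidef.1.eigenvalues) *
    (star hD.posSemidef.1.eigenvectorUnitary : Matrix (Fin n) (Fin n) ℝ))⁻¹

namespace StmtTwoAux

noncomputable def toE {n : ℕ} (u : Fin n → ℝ) : EuclideanSpace ℝ (Fin n) := WithLp.toLp 2 u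

lemma inner_toE {n : ℕ} (u v : Fin n → ℝ) :
    (inner ℝ (toE u) (toE v) : ℝ) = u ⬝ᵥ v := by
  simp [toE, PiLp.inner_apply, dotProduct, RCLike.inner_apply, mul_comm]

lemma nrm_toE {n : ℕ} (u : Fin n → ℝ) : Real.sqrt (u ⬝ᵥ u) = ‖toE u‖ := by
  rw [← inner_toE, real_inner_self_eq_norm_sq, Real.sqrt_sq (norm_nonneg _)]

lemma dot_le {n : ℕ} (u v : Fin n → ℝ) :
    u ⬝ᵥ v ≤ Real.sqrt (u ⬝ᵥ u) * Real.sqrt (v ⬝ᵥ v) := by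
  rw [← inner_toE, nrm_toE, nrm_toE]; exact real_inner_le_norm _ _

lemma dot_self_nonneg {n : ℕ} (u : Fin n → ℝ) : 0 ≤ u ⬝ᵥ u :=
  Finset.sum_nonneg fun i _ => mul_self_nonneg _

lemma dot_self_pos {n : ℕ} {u : Fin n → ℝ} (hu : u ≠ 0) : 0 < u ⬝ᵥ u := by
  rcases (dot_self_nonneg u).lt_or_eq with h | h
  · exact h
  · exact absurd (dotProduct_self_eq_zero.mp h.symm) hu

lemma dot_mulVec' {n : ℕ} (M : Matrix (Fin n) (Fin n) ℝ) (v w : Fin n → ℝ) :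
    v ⬝ᵥ M.mulVec w = M.transpose.mulVec v ⬝ᵥ w := by
  rw [Matrix.dotProduct_mulVec, ← Matrix.mulVec_transpose]

end StmtTwoAux

open StmtTwoAux

/-- The inf-sup constant of the square system matrix `A`, relative to the norm with Gram
matrix `D` and taken over the `D`-orthogonal complement of the one-dimensional kernel of
`A`, equals the smallest positive singular value of `Ã = D^{-1/2} A D^{-1/2}`, i.e. the
square root of the smallest nonzero eigenvalue of `ÃᵀÃ`. -/
theorem stmt_2 {n : ℕ} (hn : 1 ≤ n)
    (A : Matrix (Fin n) (Fin n) ℝ)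
    (hker : Module.finrank ℝ (LinearMap.ker A.mulVecLin) = 1)
    (D : Matrix (Fin n) (Fin n) ℝ) (hD : D.PosDef)
    (At : Matrix (Fin n) (Fin n) ℝ)
    (hAt : At = invSqrtPD D hD * A * invSqrtPD D hD)
    (hH : (At.transpose * At).IsHermitian) :
    (⨅ x : {x : Fin n → ℝ // x ≠ 0 ∧ ∀ k : Fin n → ℝ, A.mulVec k = 0 → x ⬝ᵥ D.mulVec k = 0},
      ⨆ y : {y : Fin n → ℝ // y ≠ 0},
        y.1 ⬝ᵥ A.mulVec x.1 /
          (Real.sqrt (y.1 ⬝ᵥ D.mulVec y.1) * Real.sqrt (x.1 ⬝ᵥ D.mulVec x.1)))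
      = Real.sqrt (sInf {μ : ℝ | μ ≠ 0 ∧ ∃ i : Fin n, hH.eigenvalues i = μ}) := by
  classical
  set S := invSqrtPD D hD with hSdef
  set R := (hD.posSemidef.1.eigenvectorUnitary.1 *
    Matrix.diagonal (Real.sqrt ∘ hD.posSemidef.1.eigenvalues) *
    (star hD.posSemidef.1.eigenvectorUnitary : Matrix (Fin n) (Fin n) ℝ)) with hRdef
  have hS : S = R⁻¹ := rfl
  have hRH : R.transpose = R := by
    rw [hRdef, Matrix.transpose_mul, Matrix.transpose_mul, Matrix.diagonal_transpose,
      ← Matrix.mul_assoc]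
    simp [Matrix.star_eq_conjTranspose, Matrix.conjTranspose_eq_transpose_of_trivial]
  have hRR : R * R = D := by
    have hsp := hD.posSemidef.1.spectral_theorem
    have hU : (star hD.posSemidef.1.eigenvectorUnitary : Matrix (Fin n) (Fin n) ℝ) *
        hD.posSemidef.1.eigenvectorUnitary.1 = 1 := Unitary.coe_star_mul_self _
    have hdd : Matrix.diagonal (Real.sqrt ∘ hD.posSemidef.1.eigenvalues) *
        Matrix.diagonal (Real.sqrt ∘ hD.posSemidef.1.eigenvalues) =
        Matrix.diagonal (RCLike.ofReal ∘ hD.posSemidef.1.eigenvalues) := by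
      rw [Matrix.diagonal_mul_diagonal]
      congr 1
      funext i
      simp [Real.mul_self_sqrt (hD.posSemidef.eigenvalues_nonneg i)]
    have gen : ∀ (U d sU : Matrix (Fin n) (Fin n) ℝ), sU * U = 1 →
        U * d * sU * (U * d * sU) = U * (d * d) * sU := by
      intro U d sU h
      rw [show U * d * sU * (U * d * sU) = U * d * (sU * U) * d * sU by
        simp only [Matrix.mul_assoc], h, Matrix.mul_one, Matrix.mul_assoc U d d]
    rw [hRdef, gen _ _ _ hU, hdd]
    conv_rhs => rw [hsp]
    rfl
  have hdet : IsUnit R.det := by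
    have hm : R.det * R.det = D.det := by rw [← Matrix.det_mul, hRR]
    have hDdet : D.det ≠ 0 := ne_of_gt hD.det_pos
    have : R.det ≠ 0 := fun h => hDdet (by rw [← hm, h, mul_zero])
    exact this.isUnit
  have hSR : S * R = 1 := by rw [hS]; exact Matrix.nonsing_inv_mul R hdet
  have hRS : R * S = 1 := by rw [hS]; exact Matrix.mul_nonsing_inv R hdet
  have hSH : S.transpose = S := by rw [hS, Matrix.transpose_nonsing_inv, hRH]
  have hRinj : ∀ w : Fin n → ℝ, R.mulVec w = 0 → w = 0 := by
    intro w hw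
    have : (S * R).mulVec w = 0 := by
      rw [← Matrix.mulVec_mulVec, hw, Matrix.mulVec_zero]
    rwa [hSR, Matrix.one_mulVec] at this
  have hSinj : ∀ w : Fin n → ℝ, S.mulVec w = 0 → w = 0 := by
    intro w hw
    have : (R * S).mulVec w = 0 := by
      rw [← Matrix.mulVec_mulVec, hw, Matrix.mulVec_zero]
    rwa [hRS, Matrix.one_mulVec] at this
  have hSRid : ∀ w : Fin n → ℝ, S.mulVec (R.mulVec w) = w := by
    intro w; rw [Matrix.mulVec_mulVec, hSR, Matrix.one_mulVec]
  have hRSid : ∀ w : Fin n → ℝ, R.mulVec (S.mulVec w) = w := by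
    intro w; rw [Matrix.mulVec_mulVec, hRS, Matrix.one_mulVec]
  have hA : A = R * At * R := by
    rw [hAt]
    have : R * (S * A * S) * R = (R * S) * A * (S * R) := by
      simp only [Matrix.mul_assoc]
    rw [this, hRS, hSR, one_mul, mul_one]
  -- A *ᵥ x = R *ᵥ (At *ᵥ (R *ᵥ x))
  have hAmul : ∀ x : Fin n → ℝ, A.mulVec x = R.mulVec (At.mulVec (R.mulVec x)) := by
    intro x
    rw [hA]
    simp only [Matrix.mulVec_mulVec, Matrix.mul_assoc]
  -- kernel transfers
  have hker2 : ∀ k : Fin n → ℝ, A.mulVec k = 0 → At.mulVec (R.mulVec k) = 0 := by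
    intro k hk
    have := congrArg S.mulVec (hAmul k)
    rw [hk, Matrix.mulVec_zero, hSRid] at this
    exact this.symm
  have hker1 : ∀ u : Fin n → ℝ, At.mulVec u = 0 → A.mulVec (S.mulVec u) = 0 := by
    intro u hu
    rw [hAmul, hRSid, hu, Matrix.mulVec_zero]
  -- the PSD matrix B = Atᵀ At
  set B := At.transpose * At with hBdef
  have hBpsd : B.PosSemidef := by
    simpa using Matrix.posSemidef_conjTranspose_mul_self At
  have hBdot : ∀ u : Fin n → ℝ, u ⬝ᵥ B.mulVec u = At.mulVec u ⬝ᵥ At.mulVec u := by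
    intro u
    rw [hBdef, ← Matrix.mulVec_mulVec, dot_mulVec', Matrix.transpose_transpose]
  have hBker : ∀ u : Fin n → ℝ, B.mulVec u = 0 → At.mulVec u = 0 := by
    intro u hu
    have h0 : At.mulVec u ⬝ᵥ At.mulVec u = 0 := by
      rw [← hBdot, hu, dotProduct_zero]
    exact dotProduct_self_eq_zero.mp h0
  have hBker' : ∀ u : Fin n → ℝ, At.mulVec u = 0 → B.mulVec u = 0 := by
    intro u hu
    rw [hBdef, ← Matrix.mulVec_mulVec, hu, Matrix.mulVec_zero]
  -- D-dot identities
  have hDdot : ∀ v w : Fin n → ℝ, v ⬝ᵥ D.mulVec w = R.mulVec v ⬝ᵥ R.mulVec w := by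
    intro v w
    rw [← hRR, ← Matrix.mulVec_mulVec, dot_mulVec', hRH]
  have hDS : ∀ v w : Fin n → ℝ, v ⬝ᵥ D.mulVec (S.mulVec w) = R.mulVec v ⬝ᵥ w := by
    intro v w
    rw [hDdot, hRSid]
  -- eigen data
  set b := hH.eigenvectorBasis with hb
  set eig := hH.eigenvalues with heig
  have heignn : ∀ i, 0 ≤ eig i := fun i => hBpsd.eigenvalues_nonneg i
  have hBeig : ∀ i, B.mulVec (b i) = eig i • (b i : Fin n → ℝ) :=
    fun i => hH.mulVec_eigenvectorBasis i
  -- ⟨b i, B w⟩ = eig i * (b i ⬝ w)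
  have hbiB : ∀ (i : Fin n) (w : Fin n → ℝ),
      (b i : Fin n → ℝ) ⬝ᵥ B.mulVec w = eig i * ((b i : Fin n → ℝ) ⬝ᵥ w) := by
    intro i w
    have hBsymm : B.transpose = B := by simpa [Matrix.IsSymm] using hBpsd.isHermitian
    rw [dot_mulVec', hBsymm, hBeig i]
    simp [dotProduct, Pi.smul_apply, smul_eq_mul, Finset.mul_sum, mul_assoc]
  have hdotb : ∀ (i : Fin n) (u : Fin n → ℝ),
      (inner ℝ (toE u) (b i) : ℝ) = (b i : Fin n → ℝ) ⬝ᵥ u := by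
    intro i u
    rw [show (b i : EuclideanSpace ℝ (Fin n)) = toE (b i : Fin n → ℝ) from rfl, inner_toE]
    exact dotProduct_comm _ _
  have hdotb' : ∀ (i : Fin n) (w : Fin n → ℝ),
      (inner ℝ (b i : EuclideanSpace ℝ (Fin n)) (toE w) : ℝ) = (b i : Fin n → ℝ) ⬝ᵥ w := by
    intro i w
    rw [show (b i : EuclideanSpace ℝ (Fin n)) = toE (b i : Fin n → ℝ) from rfl, inner_toE]
    rfl
  have hsum : ∀ u : Fin n → ℝ,
      u ⬝ᵥ B.mulVec u = ∑ i, eig i * ((b i : Fin n → ℝ) ⬝ᵥ u) ^ 2 := by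
    intro u
    have h1 : (inner ℝ (toE u) (toE (B.mulVec u)) : ℝ)
        = ∑ i, (inner ℝ (toE u) (b i) : ℝ) * inner ℝ (b i) (toE (B.mulVec u)) :=
      (b.sum_inner_mul_inner _ _).symm
    rw [inner_toE] at h1
    rw [h1]
    refine Finset.sum_congr rfl fun i _ => ?_
    rw [hdotb, hdotb', hbiB]
    ring
  have hsum2 : ∀ u : Fin n → ℝ, u ⬝ᵥ u = ∑ i, ((b i : Fin n → ℝ) ⬝ᵥ u) ^ 2 := by
    intro u
    have h1 : (inner ℝ (toE u) (toE u) : ℝ)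
        = ∑ i, (inner ℝ (toE u) (b i) : ℝ) * inner ℝ (b i) (toE u) :=
      (b.sum_inner_mul_inner _ _).symm
    rw [inner_toE] at h1
    rw [h1]
    refine Finset.sum_congr rfl fun i _ => ?_
    rw [hdotb, hdotb']
    ring
  -- the inner sup equals the normalized residual norm
  have key : ∀ x : {x : Fin n → ℝ // x ≠ 0 ∧
        ∀ k : Fin n → ℝ, A.mulVec k = 0 → x ⬝ᵥ D.mulVec k = 0},
      (⨆ y : {y : Fin n → ℝ // y ≠ 0},
        y.1 ⬝ᵥ A.mulVec x.1 /
          (Real.sqrt (y.1 ⬝ᵥ D.mulVec y.1) * Real.sqrt (x.1 ⬝ᵥ D.mulVec x.1)))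
      = Real.sqrt (At.mulVec (R.mulVec x.1) ⬝ᵥ At.mulVec (R.mulVec x.1)) /
          Real.sqrt (R.mulVec x.1 ⬝ᵥ R.mulVec x.1) := by
    rintro ⟨x, hx0, hxc⟩
    set u := R.mulVec x with hu
    set z := At.mulVec u with hz
    have hu0 : u ≠ 0 := fun h => hx0 (by rw [← hSRid x, ← hu, h, Matrix.mulVec_zero])
    have hz0 : z ≠ 0 := by
      intro h
      have hAx : A.mulVec x = 0 := by rw [hAmul, ← hu, ← hz, h, Matrix.mulVec_zero]
      have := hxc x hAx
      have hpos := hD.re_dotProduct_pos hx0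
      simp only [RCLike.re_to_real, star_trivial] at hpos
      rw [this] at hpos
      exact lt_irrefl 0 hpos
    have hub : 0 < Real.sqrt (u ⬝ᵥ u) := Real.sqrt_pos.mpr (dot_self_pos hu0)
    have hzb : 0 < Real.sqrt (z ⬝ᵥ z) := Real.sqrt_pos.mpr (dot_self_pos hz0)
    have hnum : ∀ y : Fin n → ℝ, y ⬝ᵥ A.mulVec x = R.mulVec y ⬝ᵥ z := by
      intro y
      rw [hAmul, ← hu, ← hz, dot_mulVec', hRH]
    have hval : ∀ y : {y : Fin n → ℝ // y ≠ 0},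
        y.1 ⬝ᵥ A.mulVec x / (Real.sqrt (y.1 ⬝ᵥ D.mulVec y.1) * Real.sqrt (x ⬝ᵥ D.mulVec x))
        = R.mulVec y.1 ⬝ᵥ z /
            (Real.sqrt (R.mulVec y.1 ⬝ᵥ R.mulVec y.1) * Real.sqrt (u ⬝ᵥ u)) := by
      rintro ⟨y, hy⟩
      simp only [hnum, hDdot, hu]
    have hbound : ∀ y : {y : Fin n → ℝ // y ≠ 0},
        y.1 ⬝ᵥ A.mulVec x / (Real.sqrt (y.1 ⬝ᵥ D.mulVec y.1) * Real.sqrt (x ⬝ᵥ D.mulVec x))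
        ≤ Real.sqrt (z ⬝ᵥ z) / Real.sqrt (u ⬝ᵥ u) := by
      rintro ⟨y, hy⟩
      rw [hval ⟨y, hy⟩]
      set w := R.mulVec y with hw
      have hw0 : w ≠ 0 := fun h => hy (hRinj y h)
      have hwb : 0 < Real.sqrt (w ⬝ᵥ w) := Real.sqrt_pos.mpr (dot_self_pos hw0)
      rw [div_le_div_iff₀ (by positivity) (by positivity)]
      calc w ⬝ᵥ z * Real.sqrt (u ⬝ᵥ u)
          ≤ Real.sqrt (w ⬝ᵥ w) * Real.sqrt (z ⬝ᵥ z) * Real.sqrt (u ⬝ᵥ u) := by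
            exact mul_le_mul_of_nonneg_right (dot_le w z) hub.le
        _ = Real.sqrt (z ⬝ᵥ z) * (Real.sqrt (w ⬝ᵥ w) * Real.sqrt (u ⬝ᵥ u)) := by ring
    haveI : Nonempty {y : Fin n → ℝ // y ≠ 0} := by
      refine ⟨⟨fun _ => 1, fun h => ?_⟩⟩
      have := congrFun h ⟨0, hn⟩
      norm_num at this
    refine le_antisymm (ciSup_le hbound) ?_
    have hy0 : (S.mulVec z : Fin n → ℝ) ≠ 0 := by
      intro h
      exact hz0 (by rw [← hRSid z, h, Matrix.mulVec_zero])
    have hle := le_ciSup (f := fun y : {y : Fin n → ℝ // y ≠ 0} =>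
        y.1 ⬝ᵥ A.mulVec x /
          (Real.sqrt (y.1 ⬝ᵥ D.mulVec y.1) * Real.sqrt (x ⬝ᵥ D.mulVec x)))
      ⟨_, by rintro v ⟨y, rfl⟩; exact hbound y⟩ ⟨S.mulVec z, hy0⟩
    refine le_trans (le_of_eq ?_) hle
    rw [hval ⟨S.mulVec z, hy0⟩]
    simp only [hRSid]
    rw [div_eq_div_iff (by positivity) (by positivity)]
    linear_combination Real.mul_self_sqrt (dot_self_nonneg z) * Real.sqrt (u ⬝ᵥ u)
  rw [iInf_congr key]
  by_cases hex : ∃ i, eig i ≠ 0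
  · obtain ⟨i0, hi0⟩ := hex
    have hsne : {μ : ℝ | μ ≠ 0 ∧ ∃ i : Fin n, eig i = μ}.Nonempty := ⟨eig i0, hi0, i0, rfl⟩
    have hsfin : {μ : ℝ | μ ≠ 0 ∧ ∃ i : Fin n, eig i = μ}.Finite :=
      (Set.finite_range eig).subset (by rintro μ ⟨hμ, i, rfl⟩; exact ⟨i, rfl⟩)
    obtain ⟨hμ0, i1, hi1⟩ := hsne.csInf_mem hsfin
    set μ := sInf {μ : ℝ | μ ≠ 0 ∧ ∃ i : Fin n, eig i = μ} with hμdef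
    have hμnn : 0 ≤ μ := hi1 ▸ heignn i1
    have hμpos : 0 < μ := hμnn.lt_of_ne (Ne.symm hμ0)
    have hμle : ∀ i, eig i ≠ 0 → μ ≤ eig i :=
      fun i hi => csInf_le hsfin.bddBelow ⟨hi, i, rfl⟩
    have hlow : ∀ x : {x : Fin n → ℝ // x ≠ 0 ∧
        ∀ k : Fin n → ℝ, A.mulVec k = 0 → x ⬝ᵥ D.mulVec k = 0},
        Real.sqrt μ ≤ Real.sqrt (At.mulVec (R.mulVec x.1) ⬝ᵥ At.mulVec (R.mulVec x.1)) /
          Real.sqrt (R.mulVec x.1 ⬝ᵥ R.mulVec x.1) := by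
      rintro ⟨x, hx0, hxc⟩
      set u := R.mulVec x with hu
      have hu0 : u ≠ 0 := fun h => hx0 (by rw [← hSRid x, ← hu, h, Matrix.mulVec_zero])
      have hcoef : ∀ i, eig i = 0 → (b i : Fin n → ℝ) ⬝ᵥ u = 0 := by
        intro i hi
        have hBk : B.mulVec (b i) = 0 := by rw [hBeig i, hi, zero_smul]
        have hAk : A.mulVec (S.mulVec (b i)) = 0 := hker1 _ (hBker _ hBk)
        have h := hxc _ hAk
        rw [hDS] at h
        rw [dotProduct_comm]
        exact h
      have hkey : μ * (u ⬝ᵥ u) ≤ At.mulVec u ⬝ᵥ At.mulVec u := by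
        rw [← hBdot, hsum, hsum2, Finset.mul_sum]
        refine Finset.sum_le_sum fun i _ => ?_
        by_cases hi : eig i = 0
        · rw [hi, hcoef i hi]
          simp
        · have h1 := hμle i hi
          have h2 : (0:ℝ) ≤ ((b i : Fin n → ℝ) ⬝ᵥ u) ^ 2 := sq_nonneg _
          nlinarith
      rw [le_div_iff₀ (Real.sqrt_pos.mpr (dot_self_pos hu0))]
      calc Real.sqrt μ * Real.sqrt (u ⬝ᵥ u) = Real.sqrt (μ * (u ⬝ᵥ u)) :=
            (Real.sqrt_mul hμnn _).symm
        _ ≤ _ := Real.sqrt_le_sqrt hkey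
    have hx0mem : (S.mulVec (b i1) : Fin n → ℝ) ≠ 0 ∧
        ∀ k : Fin n → ℝ, A.mulVec k = 0 → S.mulVec (b i1) ⬝ᵥ D.mulVec k = 0 := by
      constructor
      · intro h
        have h2 : (b i1 : Fin n → ℝ) = 0 := hSinj _ h
        exact b.orthonormal.ne_zero i1 (PiLp.ext fun j => by simpa using congrFun h2 j)
      · intro k hk
        rw [hDdot, hRSid]
        have hw : B.mulVec (R.mulVec k) = 0 := hBker' _ (hker2 k hk)
        have h0 : (b i1 : Fin n → ℝ) ⬝ᵥ B.mulVec (R.mulVec k) = 0 := by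
          rw [hw, dotProduct_zero]
        rw [hbiB] at h0
        rcases mul_eq_zero.mp h0 with h | h
        · exact absurd (hi1 ▸ h : μ = 0) hμ0
        · exact h
    have hbb : (b i1 : Fin n → ℝ) ⬝ᵥ (b i1 : Fin n → ℝ) = 1 := by
      have hn1 : ‖b i1‖ = 1 := b.orthonormal.1 i1
      have h2 := real_inner_self_eq_norm_sq (b i1 : EuclideanSpace ℝ (Fin n))
      rw [hn1] at h2
      rw [← hdotb' i1 (b i1 : Fin n → ℝ)]
      show inner ℝ (b i1) (b i1) = (1 : ℝ)
      rw [h2, one_pow]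
    have hval0 : Real.sqrt (At.mulVec (R.mulVec (S.mulVec (b i1))) ⬝ᵥ
          At.mulVec (R.mulVec (S.mulVec (b i1)))) /
        Real.sqrt (R.mulVec (S.mulVec (b i1)) ⬝ᵥ R.mulVec (S.mulVec (b i1))) = Real.sqrt μ := by
      rw [hRSid]
      have h1 : At.mulVec (b i1) ⬝ᵥ At.mulVec (b i1) = μ := by
        rw [← hBdot, hbiB, hbb, mul_one, hi1]
      rw [h1, hbb, Real.sqrt_one, div_one]
    haveI hne : Nonempty {x : Fin n → ℝ // x ≠ 0 ∧
        ∀ k : Fin n → ℝ, A.mulVec k = 0 → x ⬝ᵥ D.mulVec k = 0} := ⟨⟨_, hx0mem⟩⟩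
    refine le_antisymm ?_ (le_ciInf hlow)
    have hle := ciInf_le (f := fun x : {x : Fin n → ℝ // x ≠ 0 ∧
        ∀ k : Fin n → ℝ, A.mulVec k = 0 → x ⬝ᵥ D.mulVec k = 0} =>
        Real.sqrt (At.mulVec (R.mulVec x.1) ⬝ᵥ At.mulVec (R.mulVec x.1)) /
          Real.sqrt (R.mulVec x.1 ⬝ᵥ R.mulVec x.1))
      ⟨Real.sqrt μ, by rintro v ⟨x, rfl⟩; exact hlow x⟩ ⟨S.mulVec (b i1), hx0mem⟩
    exact le_trans hle (le_of_eq hval0)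
  · push_neg at hex
    have hAt0 : ∀ u : Fin n → ℝ, At.mulVec u = 0 := by
      intro u
      apply dotProduct_self_eq_zero.mp
      rw [← hBdot, hsum]
      simp [hex]
    have hA0 : ∀ x : Fin n → ℝ, A.mulVec x = 0 := by
      intro x
      rw [hAmul, hAt0, Matrix.mulVec_zero]
    haveI : IsEmpty {x : Fin n → ℝ // x ≠ 0 ∧
        ∀ k : Fin n → ℝ, A.mulVec k = 0 → x ⬝ᵥ D.mulVec k = 0} := by
      refine ⟨?_⟩
      rintro ⟨x, hx0, hxc⟩
      have h := hxc x (hA0 x)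
      have hpos := hD.re_dotProduct_pos hx0
      simp only [RCLike.re_to_real, star_trivial] at hpos
      rw [h] at hpos
      exact lt_irrefl 0 hpos
    rw [Real.iInf_of_isEmpty]
    have hse : {μ : ℝ | μ ≠ 0 ∧ ∃ i : Fin n, eig i = μ} = ∅ := by
      ext μ
      simp only [Set.mem_setOf_eq, Set.mem_empty_iff_false, iff_false, not_and]
      rintro hμ ⟨i, hi⟩
      exact hμ (hi ▸ hex i)
    rw [hse, Real.sInf_empty, Real.sqrt_zero]
end

section
/- Let V be a real vector space, let Q̃ be a real inner product space, and let e ∈ Q̃ be nonzero. Let ν ∈ (0,1/2], let F : V → ℝ be linear, and let A : V × V → ℝ and B : V × Q̃ → ℝ be bilinear forms with B(v,e) = 0 for all v ∈ V. If (u,p,r) ∈ V × Q̃ × ℝ satisfies A(u,v) + B(v,p) = F(v) for all v ∈ V, −B(u,q) + (1−2ν)⟨p,q⟩ − r⟨q,e⟩ = 0 for all q ∈ Q̃, and s·(⟨p,e⟩/⟨e,e⟩ − r) = 0 for all s ∈ ℝ, then ⟨p,e⟩ = 0 and r = 0. -/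
open scoped RealInnerProductSpace

/-- Any solution of the augmented formulation has zero-mean pressure and
vanishing Lagrange multiplier. -/
theorem stmt_5
    {V Qt : Type*} [AddCommGroup V] [Module ℝ V]
    [NormedAddCommGroup Qt] [InnerProductSpace ℝ Qt]
    (e : Qt) (he : e ≠ 0) (ν : ℝ) (hν : ν ∈ Set.Ioc (0 : ℝ) (1 / 2))
    (F : V →ₗ[ℝ] ℝ) (A : V →ₗ[ℝ] V →ₗ[ℝ] ℝ) (B : V →ₗ[ℝ] Qt →ₗ[ℝ] ℝ)
    (hBe : ∀ v : V, B v e = 0)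
    (u : V) (p : Qt) (r : ℝ)
    (h1 : ∀ v : V, A u v + B v p = F v)
    (h2 : ∀ q : Qt, -(B u q) + (1 - 2 * ν) * ⟪p, q⟫ - r * ⟪q, e⟫ = 0)
    (h3 : ∀ s : ℝ, s * (⟪p, e⟫ / ⟪e, e⟫ - r) = 0) :
    ⟪p, e⟫ = 0 ∧ r = 0 := by
  have hee : ⟪e, e⟫ ≠ 0 := fun h => he (inner_self_eq_zero.mp h)
  have hr : r = ⟪p, e⟫ / ⟪e, e⟫ := by
    have := h3 1; nlinarith [this]
  have h2e := h2 e
  rw [hBe u] at h2e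
  have hpe : ⟪p, e⟫ = 0 := by
    have hr' : r * ⟪e, e⟫ = ⟪p, e⟫ := by
      rw [hr, div_mul_cancel₀ _ hee]
    have hν0 := hν.1
    nlinarith [h2e, hr', real_inner_comm e p]
  exact ⟨hpe, by rw [hr, hpe, zero_div]⟩
end
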